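/- Fix a Hamel basis of ℝ over ℚ containing π and π+1. For α > 0 write α = q₁b_{λ₁} + … + q_s b_{λ_s} uniquely with rational qⱼ and basis elements b_{λⱼ}, and define σ(α) = q₁ + … + q_s (the sum of rational coordinates). Then σ : (0,∞) → ℚ satisfies σ(α+β) = σ(α) + σ(β) for all α,β > 0, σ(1) = 0, σ(q) = 0 for all positive rationals q, and σ is not identically zero (e.g. σ(π) = 1); in particular σ is discontinuous. -/

import Mathlib

open Real

private lemma pi_pair_li :
    LinearIndependent ℚ ((↑) : ({π, π + 1} : Set ℝ) → ℝ) := by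
  refine linearIndepOn_id_pair pi_ne_zero ?_
  intro a ha
  have hπ : ((a : ℝ) - 1) * π = 1 := by
    have h : (a : ℝ) * π = π + 1 := by simpa [Rat.smul_def] using ha
    nlinarith [h]
  have ha1 : ((a : ℝ) - 1) ≠ 0 := by
    intro h; rw [h] at hπ; simp at hπ
  have : π = (((a - 1)⁻¹ : ℚ) : ℝ) := by
    push_cast
    field_simp
    linarith
  exact irrational_pi ⟨(a - 1)⁻¹, this.symm⟩

theorem hamel_basis_coordinate_sum :
    ∃ (ι : Type) (b : Module.Basis ι ℚ ℝ), π ∈ Set.range b ∧ (π + 1) ∈ Set.range b ∧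
      ∀ σ : ℝ → ℚ, (σ = fun α => (b.repr α).sum fun _ q => q) →
        (∀ α > (0:ℝ), ∀ β > (0:ℝ), σ (α + β) = σ α + σ β) ∧
        σ 1 = 0 ∧
        (∀ q : ℚ, 0 < q → σ (q : ℝ) = 0) ∧
        σ π = 1 ∧
        ∀ x₀ > (0:ℝ), ¬ ContinuousWithinAt (fun x => (σ x : ℝ)) (Set.Ioi 0) x₀ := by
  classical
  set s : Set ℝ := {π, π + 1} with hs
  have hli : LinearIndepOn ℚ id s := pi_pair_li
  set b : Module.Basis (hli.extend (Set.subset_univ s)) ℚ ℝ := Module.Basis.extend hli with hb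
  have hsub : s ⊆ hli.extend (Set.subset_univ s) := hli.subset_extend _
  have hπmem : π ∈ hli.extend (Set.subset_univ s) := hsub (by simp [hs])
  have hπ1mem : (π + 1) ∈ hli.extend (Set.subset_univ s) := hsub (by simp [hs])
  refine ⟨_, b, ⟨⟨π, hπmem⟩, Module.Basis.extend_apply_self hli _⟩,
    ⟨⟨π + 1, hπ1mem⟩, Module.Basis.extend_apply_self hli _⟩, ?_⟩
  intro σ hσ
  -- σ is ℚ-linear
  set L : ℝ →ₗ[ℚ] ℚ :=
    (Finsupp.lsum ℚ (fun _ => LinearMap.id)).comp b.repr.toLinearMap with hL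
  have hσL : σ = fun x => L x := by
    rw [hσ]; funext x
    simp [hL, Finsupp.lsum_apply, Finsupp.sum]
  have hσb : ∀ i, σ (b i) = 1 := by
    intro i
    rw [hσ]
    simp [Module.Basis.repr_self, Finsupp.sum_single_index]
  have hσπ : σ π = 1 := by
    have := hσb ⟨π, hπmem⟩
    rwa [Module.Basis.extend_apply_self] at this
  have hσπ1 : σ (π + 1) = 1 := by
    have := hσb ⟨π + 1, hπ1mem⟩
    rwa [Module.Basis.extend_apply_self] at this
  have hadd : ∀ x y : ℝ, σ (x + y) = σ x + σ y := by
    intro x y; rw [hσL]; exact L.map_add x y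
  have hσ1 : σ 1 = 0 := by
    have := hadd π 1
    rw [hσπ1] at this
    rw [hσπ] at this
    linarith
  have hL1 : L 1 = 0 := by rw [show L 1 = σ 1 from by rw [hσL], hσ1]
  have hσq : ∀ q : ℚ, σ (q : ℝ) = 0 := by
    intro q
    have h1 : (q : ℝ) = q • (1 : ℝ) := by simp [Rat.smul_def]
    calc σ (q : ℝ) = L (q • (1 : ℝ)) := by rw [hσL, h1]
      _ = q • L 1 := L.map_smul q 1
      _ = 0 := by rw [hL1, smul_zero]
  refine ⟨fun α _ β _ => hadd α β, hσ1, fun q _ => hσq q, hσπ, ?_⟩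
  intro x₀ hx₀ hcont
  -- sequence of rationals q n ∈ (x₀, x₀ + 1/(n+1))
  have hrat : ∀ (c : ℝ) (n : ℕ), ∃ q : ℚ, c < q ∧ (q : ℝ) < c + 1 / (n + 1) := by
    intro c n
    have : (0:ℝ) < 1 / (n + 1) := by positivity
    exact exists_rat_btwn (by linarith)
  choose q hq1 hq2 using fun n => hrat x₀ n
  choose r hr1 hr2 using fun n => hrat (x₀ - π) n
  have htend : ∀ (u : ℕ → ℝ), (∀ n, x₀ < u n) → (∀ n, u n < x₀ + 1 / (n + 1)) →
      Filter.Tendsto u Filter.atTop (nhdsWithin x₀ (Set.Ioi 0)) := by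
    intro u h1 h2
    apply tendsto_nhdsWithin_of_tendsto_nhds_of_eventually_within
    · have : Filter.Tendsto (fun n : ℕ => x₀ + 1 / (n + 1 : ℝ)) Filter.atTop (nhds x₀) := by
        simpa using (tendsto_one_div_add_atTop_nhds_zero_nat).const_add x₀
      exact tendsto_of_tendsto_of_tendsto_of_le_of_le tendsto_const_nhds this
        (fun n => (h1 n).le) (fun n => (h2 n).le)
    · exact Filter.Eventually.of_forall fun n => lt_trans hx₀ (h1 n)
  have t1 : Filter.Tendsto (fun n => ((σ (q n) : ℝ))) Filter.atTop (nhds ((σ x₀ : ℝ))) :=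
    hcont.tendsto.comp (htend (fun n => (q n : ℝ)) hq1 hq2)
  have t2 : Filter.Tendsto (fun n => ((σ ((r n : ℝ) + π) : ℝ))) Filter.atTop
      (nhds ((σ x₀ : ℝ))) := by
    refine hcont.tendsto.comp (htend (fun n => (r n : ℝ) + π) ?_ ?_)
    · intro n; have := hr1 n; show x₀ < (r n : ℝ) + π; linarith
    · intro n; have := hr2 n; show (r n : ℝ) + π < x₀ + 1 / (n + 1); linarith
  have e1 : ∀ n, ((σ (q n) : ℝ)) = 0 := fun n => by rw [hσq]; norm_num
  have e2 : ∀ n, ((σ ((r n : ℝ) + π) : ℝ)) = 1 := fun n => by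
    rw [hadd, hσq, hσπ]; norm_num
  simp only [e1] at t1
  simp only [e2] at t2
  have h0 : (σ x₀ : ℝ) = 0 := tendsto_nhds_unique t1 tendsto_const_nhds
  have h1' : (σ x₀ : ℝ) = 1 := tendsto_nhds_unique t2 tendsto_const_nhds
  rw [h0] at h1'
  norm_num at h1'
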